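/- Fix integers m ≥ 1 and k ≥ 0, and define the polynomial P(y) = y^k + Σ_{j=1}^{⌊k/(2m)⌋} (1/j!)·(−1)^{mj}·(k!/(k−2mj)!)·y^{k−2mj}. Then for all y ∈ ℝ: (−1)^{m+1}·P^{(2m)}(y) − (1/(2m))·y·P′(y) = −(k/(2m))·P(y); that is, P is an eigenfunction of the adjoint operator B* = (−1)^{m+1}D^{2m} − (1/(2m))·y·D with eigenvalue −k/(2m). -/

import Mathlib

open Real Filter

lemma iter_deriv_sum_pow (s : Finset ℕ) (c : ℕ → ℝ) (e : ℕ → ℕ) :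
    ∀ n, deriv^[n] (fun y : ℝ => ∑ j ∈ s, c j * y ^ e j)
      = fun y => ∑ j ∈ s, c j * ((e j).descFactorial n : ℝ) * y ^ (e j - n) := by
  intro n
  induction n with
  | zero => simp
  | succ n ih =>
    rw [Function.iterate_succ_apply', ih]
    funext y
    rw [deriv_fun_sum (fun i _ => by fun_prop)]
    refine Finset.sum_congr rfl fun j _ => ?_
    rw [show (fun y : ℝ => c j * ((e j).descFactorial n : ℝ) * y ^ (e j - n))
        = fun y : ℝ => (c j * ((e j).descFactorial n : ℝ)) * y ^ (e j - n) from rfl,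
      deriv_const_mul _ (by fun_prop), deriv_pow_field]
    rw [Nat.descFactorial_succ, show e j - n - 1 = e j - (n + 1) by omega]
    push_cast
    ring

lemma range_succ_eq_insert (n : ℕ) :
    Finset.range (n+1) = insert 0 (Finset.Icc 1 n) := by
  ext x; simp only [Finset.mem_range, Finset.mem_Icc, Finset.mem_insert]; omega

/-- Generalized Hermite polynomials are eigenfunctions of B* with eigenvalue −k/(2m). -/
theorem stmt_14 (m k : ℕ) (hm : 1 ≤ m) (P : ℝ → ℝ)
    (hP : ∀ y : ℝ, P y = y ^ k + ∑ j ∈ Finset.Icc 1 (k / (2*m)),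
      (1 / (j.factorial : ℝ)) * (-1 : ℝ) ^ (m*j) *
        ((k.factorial : ℝ) / (((k - 2*m*j).factorial : ℕ) : ℝ)) * y ^ (k - 2*m*j)) :
    ∀ y : ℝ, (-1 : ℝ) ^ (m+1) * (deriv^[2*m] P) y - (1 / (2*(m:ℝ))) * y * deriv P y
      = -((k:ℝ) / (2*(m:ℝ))) * P y := by
  set N := k / (2*m) with hN
  set c : ℕ → ℝ := fun j => (1 / (j.factorial : ℝ)) * (-1 : ℝ) ^ (m*j) *
      ((k.factorial : ℝ) / (((k - 2*m*j).factorial : ℕ) : ℝ)) with hc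
  set e : ℕ → ℕ := fun j => k - 2*m*j with he
  have hPQ : P = fun y => ∑ j ∈ Finset.range (N+1), c j * y ^ e j := by
    funext y
    rw [hP y, range_succ_eq_insert, Finset.sum_insert (by simp)]
    simp only [hc, he]
    congr 1
    simp only [Nat.mul_zero, Nat.sub_zero, Nat.factorial_zero, pow_zero, Nat.cast_one]
    rw [div_self (show ((k.factorial : ℕ) : ℝ) ≠ 0 from Nat.cast_ne_zero.mpr k.factorial_ne_zero)]
    norm_num
  rw [hPQ]
  intro y
  rw [iter_deriv_sum_pow]
  rw [show deriv (fun y => ∑ j ∈ Finset.range (N+1), c j * y ^ e j)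
      = deriv^[1] (fun y => ∑ j ∈ Finset.range (N+1), c j * y ^ e j) from rfl,
    iter_deriv_sum_pow]
  simp only
  rw [Finset.mul_sum, Finset.mul_sum, Finset.mul_sum]
  have key : ∑ j ∈ Finset.range (N+1),
      (-1:ℝ)^(m+1) * (c j * ((e j).descFactorial (2*m) : ℝ) * y ^ (e j - 2*m))
      = ∑ j ∈ Finset.range (N+1), (-(j:ℝ)) * c j * y ^ e j := by
    rw [Finset.sum_range_succ, Finset.sum_range_succ']
    have hlast : ((e N).descFactorial (2*m) : ℕ) = 0 := by
      rw [Nat.descFactorial_eq_zero_iff_lt]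
      have hd := Nat.div_add_mod k (2*m)
      rw [← hN] at hd
      have hmod : k % (2*m) < 2*m := Nat.mod_lt k (by omega)
      simp only [he]
      obtain ⟨q, hq⟩ : ∃ q, 2*m*N = q := ⟨_, rfl⟩
      rw [hq] at hd ⊢
      omega
    rw [hlast]
    norm_num
    refine Finset.sum_congr rfl fun j hj => ?_
    rw [Finset.mem_range] at hj
    have hexp : 2*m*(j+1) = 2*m*j + 2*m := by ring
    have h2m : 2*m*j + 2*m ≤ k := by
      rw [← hexp]
      have h1 : j + 1 ≤ N := hj
      have h3 : N * (2*m) ≤ k := Nat.div_mul_le_self k (2*m)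
      nlinarith
    have hej : e j - 2*m = e (j+1) := by simp only [he, hexp]; omega
    have hejge : 2*m ≤ e j := by simp only [he]; omega
    rw [hej]
    have hrel : (-1:ℝ)^(m+1) * c j * ((e j).descFactorial (2*m) : ℝ)
        = -((j:ℝ)+1) * c (j+1) := by
      have h3 : e j = k - 2*m*j := by rw [he]
      rw [h3]
      have hdf : ((k - 2*m*(j+1)).factorial : ℝ)
          * (((k - 2*m*j).descFactorial (2*m) : ℕ) : ℝ)
          = ((k - 2*m*j).factorial : ℝ) := by
        have h := Nat.factorial_mul_descFactorial hejge
        rw [hej] at h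
        have h2 : e (j+1) = k - 2*m*(j+1) := by rw [he]
        rw [h2, h3] at h
        exact_mod_cast h
      have hsign : (-1:ℝ)^(m+1) * (-1:ℝ)^(m*j) = -(-1:ℝ)^(m*(j+1)) := by
        rw [← pow_add, show m+1+m*j = m*(j+1)+1 by ring, pow_succ]; ring
      have hfac : ((j+1).factorial : ℝ) = ((j:ℝ)+1) * (j.factorial:ℝ) := by
        rw [Nat.factorial_succ]; push_cast; ring
      simp only [hc]
      have n1 : ((k - 2*m*j).factorial : ℝ) ≠ 0 := by positivity
      have n2 : ((k - 2*m*(j+1)).factorial : ℝ) ≠ 0 := by positivity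
      have n3 : (j.factorial : ℝ) ≠ 0 := by positivity
      have n4 : ((j+1).factorial : ℝ) ≠ 0 := by positivity
      have nD : (((k - 2*m*j).descFactorial (2*m) : ℕ) : ℝ) ≠ 0 :=
        Nat.cast_ne_zero.mpr (by rw [Ne, Nat.descFactorial_eq_zero_iff_lt]; omega)
      rw [hfac, ← hdf, show (-1:ℝ)^(m*(j+1)) = -((-1:ℝ)^(m+1) * (-1:ℝ)^(m*j)) by rw [hsign]; ring]
      field_simp
    push_cast at hrel ⊢
    linear_combination y ^ e (j+1) * hrel
  rw [key, ← Finset.sum_sub_distrib]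
  refine Finset.sum_congr rfl fun j hj => ?_
  rw [Finset.mem_range, Nat.lt_succ_iff] at hj
  have h2mj : 2*m*j ≤ k := by
    have h3 : N * (2*m) ≤ k := Nat.div_mul_le_self k (2*m)
    nlinarith
  have hcast : (e j : ℝ) = (k:ℝ) - 2*(m:ℝ)*(j:ℝ) := by
    simp only [he]
    rw [Nat.cast_sub h2mj]
    push_cast
    ring
  have haux : (e j : ℝ) * (y * y ^ (e j - 1)) = (e j : ℝ) * y ^ (e j) := by
    rcases Nat.eq_zero_or_pos (e j) with h | h
    · simp [h]
    · rw [← pow_succ', show e j - 1 + 1 = e j by omega]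
  rw [Nat.descFactorial_one]
  have hm' : (2*(m:ℝ)) ≠ 0 := by positivity
  field_simp
  linear_combination (-(c j)) * haux + (-(c j * y ^ (e j))) * hcast
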